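/- In any n-player stingy quantum race (n ≥ 2) with coinciding Nash equilibrium supported on {T*,...,K}, each player's winning probability (1/z_{T*})^{n−1} is strictly less than 1/n. -/

import Mathlib

open Finset

/-- Telescoping sum over `Icc (T+1) K`. -/
lemma aux_tele_17 (f : ℕ → ℝ) (T : ℕ) : ∀ K, T ≤ K →
    ∑ t ∈ Icc (T+1) K, (f (t-1) - f t) = f T - f K := by
  intro K hK
  induction K, hK using Nat.le_induction with
  | base => simp
  | succ K hK ih =>
      rw [Finset.sum_Icc_succ_top (by omega), ih]
      simp

/-- `n (u - v) v^(n-1) ≤ u^n - v^n` for `0 ≤ v ≤ u`. -/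
lemma aux_pow_le_17 {u v : ℝ} (n : ℕ) (h0 : 0 ≤ v) (h : v ≤ u) :
    (n : ℝ) * ((u - v) * v ^ (n-1)) ≤ u ^ n - v ^ n := by
  rw [← geom_sum₂_mul u v n]
  have hterm : ∀ i ∈ Finset.range n, v ^ (n-1) ≤ u ^ i * v ^ (n - 1 - i) := by
    intro i hi
    rw [Finset.mem_range] at hi
    calc v ^ (n-1) = v ^ i * v ^ (n - 1 - i) := by
            rw [← pow_add]; congr 1; omega
      _ ≤ u ^ i * v ^ (n - 1 - i) :=
            mul_le_mul_of_nonneg_right (pow_le_pow_left₀ h0 h i) (pow_nonneg h0 _)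
  have hsum : (n : ℝ) * v ^ (n-1) ≤ ∑ i ∈ Finset.range n, u ^ i * v ^ (n - 1 - i) := by
    calc (n : ℝ) * v ^ (n-1) = ∑ _i ∈ Finset.range n, v ^ (n-1) := by
          rw [Finset.sum_const, Finset.card_range, nsmul_eq_mul]
      _ ≤ _ := Finset.sum_le_sum hterm
  calc (n : ℝ) * ((u - v) * v ^ (n-1)) = ((n:ℝ) * v ^ (n-1)) * (u - v) := by ring
    _ ≤ _ := mul_le_mul_of_nonneg_right hsum (by linarith)

/-- Strict version for `0 ≤ v < u`, `2 ≤ n`. -/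
lemma aux_pow_lt_17 {u v : ℝ} (n : ℕ) (hn : 2 ≤ n) (h0 : 0 ≤ v) (h : v < u) :
    (n : ℝ) * ((u - v) * v ^ (n-1)) < u ^ n - v ^ n := by
  rw [← geom_sum₂_mul u v n]
  have hterm : ∀ i ∈ Finset.range n, v ^ (n-1) ≤ u ^ i * v ^ (n - 1 - i) := by
    intro i hi
    rw [Finset.mem_range] at hi
    calc v ^ (n-1) = v ^ i * v ^ (n - 1 - i) := by
            rw [← pow_add]; congr 1; omega
      _ ≤ u ^ i * v ^ (n - 1 - i) :=
            mul_le_mul_of_nonneg_right (pow_le_pow_left₀ h0 h.le i) (pow_nonneg h0 _)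
  have hstrict : v ^ (n-1) < u ^ (n-1) * v ^ (n - 1 - (n-1)) := by
    have h2 : n - 1 - (n-1) = 0 := by omega
    rw [h2, pow_zero, mul_one]
    exact pow_lt_pow_left₀ h h0 (by omega)
  have hsum : (n : ℝ) * v ^ (n-1) < ∑ i ∈ Finset.range n, u ^ i * v ^ (n - 1 - i) := by
    calc (n : ℝ) * v ^ (n-1) = ∑ _i ∈ Finset.range n, v ^ (n-1) := by
          rw [Finset.sum_const, Finset.card_range, nsmul_eq_mul]
      _ < _ := Finset.sum_lt_sum hterm ⟨n-1, Finset.mem_range.2 (by omega), hstrict⟩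
  calc (n : ℝ) * ((u - v) * v ^ (n-1)) = ((n:ℝ) * v ^ (n-1)) * (u - v) := by ring
    _ < _ := mul_lt_mul_of_pos_right hsum (by linarith)

theorem stmt_17 (n K : ℕ) (P q r z : ℕ → ℝ) (Tstar : ℕ)
    (hn : 2 ≤ n) (hK : 2 ≤ K)
    (hP1 : 0 < P 1) (hPK : P K ≤ 1)
    (hPmono : ∀ i j, 1 ≤ i → i < j → j ≤ K → P i < P j)
    (hq : ∀ i, q i = (1 / P i) *
      ((P (i-1)) ^ (-(1:ℝ)/((n:ℝ)-1)) - (P i) ^ (-(1:ℝ)/((n:ℝ)-1))))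
    (hr : ∀ T, r T = (1 / (1 - P T)) *
      ((P K) ^ (-(1:ℝ)/((n:ℝ)-1)) - ∑ i ∈ Finset.Icc (T+1) K, (1 - P i) * q i))
    (hz : ∀ T, z T = r T + ∑ i ∈ Finset.Icc (T+1) K, q i)
    (hT1 : 1 ≤ Tstar) (hT2 : Tstar ≤ K) (hT3 : 0 < r Tstar)
    (hT4 : ∀ T, 1 ≤ T → T < Tstar → r T ≤ 0) :
    (1 / z Tstar) ^ (n - 1) < 1 / (n : ℝ) := by
  set T := Tstar with hTdef
  -- basic facts about P
  have hPpos : ∀ i, 1 ≤ i → i ≤ K → 0 < P i := by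
    intro i h1 h2
    rcases eq_or_lt_of_le h1 with h | h
    · rwa [← h]
    · exact lt_trans hP1 (hPmono 1 i le_rfl h h2)
  have hPle1 : ∀ i, 1 ≤ i → i ≤ K → P i ≤ 1 := by
    intro i h1 h2
    rcases eq_or_lt_of_le h2 with h | h
    · rwa [h]
    · exact le_of_lt (lt_of_lt_of_le (hPmono i K h1 h (le_refl K)) hPK)
  -- the exponent
  have hnR : ((n:ℝ) - 1) = ((n-1 : ℕ) : ℝ) := by
    have h1 : (1:ℕ) ≤ n := by omega
    push_cast [Nat.cast_sub h1]
    ring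
  have hnR_pos : (0:ℝ) < (n:ℝ) - 1 := by
    rw [hnR]; exact_mod_cast Nat.sub_pos_of_lt (by omega)
  have hexp_neg : (-(1:ℝ)/((n:ℝ)-1)) < 0 :=
    div_neg_of_neg_of_pos (by norm_num) hnR_pos
  set e : ℝ := -(1:ℝ)/((n:ℝ)-1) with he
  set a : ℕ → ℝ := fun i => P i ^ e with ha
  have haeq : ∀ i, P i ^ e = a i := fun i => rfl
  -- a i ^ (n-1) = 1 / P i
  have ha_pow : ∀ i, 1 ≤ i → i ≤ K → a i ^ (n-1) = 1 / P i := by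
    intro i h1 h2
    have hp := hPpos i h1 h2
    show (P i ^ e) ^ (n-1) = 1 / P i
    rw [← Real.rpow_natCast (P i ^ e) (n-1), ← Real.rpow_mul hp.le]
    have h3 : e * ((n-1 : ℕ) : ℝ) = -1 := by
      rw [he, ← hnR]
      field_simp
    rw [h3, Real.rpow_neg_one, one_div]
  have ha_pos : ∀ i, 1 ≤ i → i ≤ K → 0 < a i := fun i h1 h2 =>
    Real.rpow_pos_of_pos (hPpos i h1 h2) e
  have ha_ge1 : ∀ i, 1 ≤ i → i ≤ K → 1 ≤ a i := fun i h1 h2 =>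
    Real.one_le_rpow_of_pos_of_le_one_of_nonpos (hPpos i h1 h2) (hPle1 i h1 h2) hexp_neg.le
  have ha_anti : ∀ i j, 1 ≤ i → i < j → j ≤ K → a j < a i := fun i j h1 h2 h3 =>
    Real.rpow_lt_rpow_of_neg (hPpos i h1 (by omega)) (hPmono i j h1 h2 h3) hexp_neg
  -- q rewritten
  have hq' : ∀ i ∈ Icc (T+1) K, P i * q i = a (i-1) - a i := by
    intro i hi
    simp only [Finset.mem_Icc] at hi
    have hp : P i ≠ 0 := ne_of_gt (hPpos i (by omega) hi.2)
    rw [hq i, haeq, haeq]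
    field_simp
  set S : ℝ := ∑ i ∈ Icc (T+1) K, q i with hS
  -- telescoping sum of P i * q i
  have hPqsum : ∑ i ∈ Icc (T+1) K, P i * q i = a T - a K := by
    rw [Finset.sum_congr rfl hq']
    exact aux_tele_17 a T K hT2
  -- r in simplified form
  have hr' : r T = (a T - S) / (1 - P T) := by
    have h1 : ∑ i ∈ Icc (T+1) K, (1 - P i) * q i = S - (a T - a K) := by
      rw [hS, ← hPqsum, ← Finset.sum_sub_distrib]
      apply Finset.sum_congr rfl
      intro i _; ring
    rw [hr T, h1, haeq]; ring
  -- P T < 1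
  have hPT1 : P T < 1 := by
    by_contra hcon
    push_neg at hcon
    have hTK : T = K := by
      by_contra hne
      have h4 : P T < P K := hPmono T K hT1 (by omega) le_rfl
      linarith
    have hPTeq : P T = 1 := le_antisymm (by rw [hTK]; exact hPK) hcon
    have h5 : r T = 0 := by
      rw [hr T, hPTeq]; simp
    linarith
  have hPTpos : 0 < P T := hPpos T hT1 hT2
  -- a T > S
  have hSlt : S < a T := by
    have h1 : 0 < 1 - P T := by linarith
    have h2 := hT3
    rw [hr'] at h2
    rcases div_pos_iff.mp h2 with ⟨h, _⟩ | ⟨_, h⟩ <;> linarith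
  -- z = a T + P T * r T
  have hz' : z T = a T + P T * r T := by
    rw [hz T, ← hS, hr']
    have h1 : (1 : ℝ) - P T ≠ 0 := by linarith
    field_simp
    ring
  have haT1 : 1 ≤ a T := ha_ge1 T hT1 hT2
  have hzgt : a T < z T := by nlinarith [hT3]
  have hzpos : 0 < z T := by linarith
  have hzne : z T ≠ 0 := ne_of_gt hzpos
  -- the chain b
  set b : ℕ → ℝ := fun t => if t < T then 1 else a t / z T with hb
  have hbT1 : b (T-1) = 1 := by
    simp only [hb]
    rw [if_pos (by omega)]
  have hbge : ∀ t, ¬ t < T → b t = a t / z T := by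
    intro t ht
    simp only [hb]
    rw [if_neg ht]
  -- b nonneg on the range
  have hb0 : ∀ t ∈ Icc T K, 0 ≤ b t := by
    intro t ht
    rw [Finset.mem_Icc] at ht
    rw [hbge t (by omega)]
    exact div_nonneg (ha_pos t (by omega) ht.2).le hzpos.le
  -- b decreasing steps
  have hbstep : ∀ t ∈ Icc T K, b t ≤ b (t-1) := by
    intro t ht
    rw [Finset.mem_Icc] at ht
    rcases eq_or_lt_of_le ht.1 with h | h
    · rw [← h, hbT1, hbge T (by omega)]
      rw [div_le_one hzpos]
      linarith
    · rw [hbge t (by omega), hbge (t-1) (by omega)]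
      have h4 : a t ≤ a (t-1) := (ha_anti (t-1) t (by omega) (by omega) ht.2).le
      gcongr
  have hbstrict : b T < b (T-1) := by
    rw [hbT1, hbge T (by omega), div_lt_one hzpos]
    exact hzgt
  -- value of each summand
  have hn1 : n - 1 + 1 = n := by omega
  have hzn : z T ^ n = z T ^ (n-1) * z T := by
    rw [← pow_succ, hn1]
  have hterm : ∀ t ∈ Icc T K, (b (t-1) - b t) * b t ^ (n-1) =
      (if t = T then r T else q t) / z T ^ n := by
    intro t ht
    rw [Finset.mem_Icc] at ht
    rcases eq_or_lt_of_le ht.1 with h | h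
    · rw [if_pos h.symm, ← h]
      have hPne : P T ≠ 0 := ne_of_gt hPTpos
      have hsub : b (T-1) - b T = (P T * r T) / z T := by
        rw [hbT1, hbge T (by omega)]
        field_simp
        linarith [hz']
      rw [hsub, hbge T (by omega), div_pow, ha_pow T hT1 hT2, hzn]
      field_simp
    · rw [if_neg (by omega)]
      have hqt := hq' t (by rw [Finset.mem_Icc]; omega)
      have hPne : P t ≠ 0 := ne_of_gt (hPpos t (by omega) ht.2)
      have hsub : b (t-1) - b t = (P t * q t) / z T := by
        rw [hbge t (by omega), hbge (t-1) (by omega), div_sub_div_same, hqt]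
      rw [hsub, hbge t (by omega), div_pow, ha_pow t (by omega) ht.2, hzn]
      field_simp
  -- the sum equals (1/z)^(n-1)
  have hsplit : Icc T K = insert T (Icc (T+1) K) := by
    rw [Finset.Icc_add_one_left_eq_Ioc, Finset.Ioc_insert_left hT2]
  have hTnot : T ∉ Icc (T+1) K := by rw [Finset.mem_Icc]; omega
  have hM : ∑ t ∈ Icc T K, (b (t-1) - b t) * b t ^ (n-1) = (1 / z T) ^ (n-1) := by
    rw [Finset.sum_congr rfl hterm, hsplit, Finset.sum_insert hTnot, if_pos rfl]
    have h6 : ∑ t ∈ Icc (T+1) K, (if t = T then r T else q t) / z T ^ n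
        = S / z T ^ n := by
      rw [hS, Finset.sum_div]
      apply Finset.sum_congr rfl
      intro t ht
      rw [Finset.mem_Icc] at ht
      rw [if_neg (by omega)]
    rw [h6, ← add_div, ← hz T]
    rw [one_div, inv_pow, ← one_div, div_eq_div_iff (by positivity) (by positivity), hzn]
    ring
  -- main strict inequality
  have hkey : (n:ℝ) * ∑ t ∈ Icc T K, (b (t-1) - b t) * b t ^ (n-1)
      < ∑ t ∈ Icc T K, (b (t-1) ^ n - b t ^ n) := by
    rw [Finset.mul_sum]
    apply Finset.sum_lt_sum
    · intro t ht
      exact aux_pow_le_17 n (hb0 t ht) (hbstep t ht)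
    · refine ⟨T, by rw [Finset.mem_Icc]; omega, ?_⟩
      exact aux_pow_lt_17 n hn (hb0 T (by rw [Finset.mem_Icc]; omega)) hbstrict
  -- telescoping
  have htel : ∑ t ∈ Icc T K, (b (t-1) ^ n - b t ^ n) = 1 - b K ^ n := by
    have h7 := aux_tele_17 (fun t => b t ^ n) (T-1) K (by omega)
    have h8 : T - 1 + 1 = T := by omega
    rw [h8] at h7
    rw [h7]
    simp only [hbT1, one_pow]
  have hbK : 0 ≤ b K ^ n := pow_nonneg (hb0 K (by rw [Finset.mem_Icc]; omega)) n
  rw [hM] at hkey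
  rw [htel] at hkey
  have hfin : (n:ℝ) * (1 / z T) ^ (n-1) < 1 := by linarith
  rw [lt_div_iff₀ (by exact_mod_cast Nat.lt_of_lt_of_le Nat.zero_lt_two hn)]
  linarith
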